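/- Let X be a Hilbert space and S₁, S₂ nonempty closed convex disjoint sets. Then the set of minimizers of x ↦ ½d(x,S₁) + ½d(x,S₂) equals {x ∈ X : x ∈ ]P₁(x), P₂(x)[} ∪ argmin_{S₁} d_{S₂} ∪ argmin_{S₂} d_{S₁}, where ]P₁(x),P₂(x)[ is the open segment between the projections P₁(x) ∈ S₁ and P₂(x) ∈ S₂ of x. -/

import Mathlib

open Metric

local notation "⟪" x ", " y "⟫" => @inner ℝ _ _ x y

private lemma proj_inner_aux {X : Type*} [NormedAddCommGroup X] [InnerProductSpace ℝ X]
    {S : Set X} (hS : Convex ℝ S) {x a : X} (ha : a ∈ S)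
    (hd : dist x a = infDist x S) : ∀ s ∈ S, ⟪x - a, s - a⟫ ≤ 0 := by
  apply (norm_eq_iInf_iff_real_inner_le_zero hS ha).mp
  rw [← dist_eq_norm, hd, infDist_eq_iInf]
  simp_rw [dist_eq_norm]

private lemma gap_aux {X : Type*} [NormedAddCommGroup X] [InnerProductSpace ℝ X]
    {S₁ S₂ : Set X} {a b : X}
    (h1 : ∀ s ∈ S₁, ⟪b - a, s - a⟫ ≤ 0) (h2 : ∀ s ∈ S₂, ⟪a - b, s - b⟫ ≤ 0)
    {s₁ s₂ : X} (hs₁ : s₁ ∈ S₁) (hs₂ : s₂ ∈ S₂) : ‖b - a‖ ≤ dist s₁ s₂ := by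
  have key : s₂ - s₁ = (b - a) + ((s₂ - b) - (s₁ - a)) := by abel
  have expand := norm_add_sq_real (b - a) ((s₂ - b) - (s₁ - a))
  rw [← key] at expand
  have hi : ⟪b - a, (s₂ - b) - (s₁ - a)⟫ = ⟪b - a, s₂ - b⟫ - ⟪b - a, s₁ - a⟫ :=
    inner_sub_right _ _ _
  have hp : (0:ℝ) ≤ ⟪b - a, s₂ - b⟫ := by
    have h := h2 s₂ hs₂
    have hflip : ⟪a - b, s₂ - b⟫ = -⟪b - a, s₂ - b⟫ := by
      rw [show a - b = -(b - a) by abel, inner_neg_left]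
    rw [hflip] at h
    linarith
  have hq := h1 s₁ hs₁
  have hsq : ‖b - a‖ ^ 2 ≤ ‖s₂ - s₁‖ ^ 2 := by
    rw [expand, hi]
    nlinarith [sq_nonneg ‖(s₂ - b) - (s₁ - a)‖]
  rw [dist_eq_norm, show s₁ - s₂ = -(s₂ - s₁) by abel, norm_neg]
  nlinarith [norm_nonneg (b - a), norm_nonneg (s₂ - s₁)]

theorem argmin_half_dist_sum_char {X : Type*} [NormedAddCommGroup X]
    [InnerProductSpace ℝ X] [CompleteSpace X]
    (S₁ S₂ : Set X) (h₁ : S₁.Nonempty) (h₂ : S₂.Nonempty)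
    (hc₁ : IsClosed S₁) (hc₂ : IsClosed S₂)
    (hv₁ : Convex ℝ S₁) (hv₂ : Convex ℝ S₂) (hdisj : S₁ ∩ S₂ = ∅)
    (P₁ P₂ : X → X)
    (hP₁ : ∀ x, P₁ x ∈ S₁ ∧ dist x (P₁ x) = infDist x S₁)
    (hP₂ : ∀ x, P₂ x ∈ S₂ ∧ dist x (P₂ x) = infDist x S₂) :
    {x : X | ∀ y : X, (1 / 2) * infDist x S₁ + (1 / 2) * infDist x S₂ ≤
        (1 / 2) * infDist y S₁ + (1 / 2) * infDist y S₂} =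
      {x : X | ∃ t : ℝ, 0 < t ∧ t < 1 ∧ x = (1 - t) • P₁ x + t • P₂ x} ∪
      {x : X | x ∈ S₁ ∧ ∀ s ∈ S₁, infDist x S₂ ≤ infDist s S₂} ∪
      {x : X | x ∈ S₂ ∧ ∀ s ∈ S₂, infDist x S₁ ≤ infDist s S₁} := by
  ext x
  obtain ⟨ha, hda⟩ := hP₁ x
  obtain ⟨hb, hdb⟩ := hP₂ x
  set a := P₁ x with ha_def
  set b := P₂ x with hb_def
  simp only [Set.mem_union, Set.mem_setOf_eq]
  constructor
  · -- minimizer ⟹ union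
    intro hx
    by_cases hx1 : x ∈ S₁
    · refine Or.inl (Or.inr ⟨hx1, fun s hs => ?_⟩)
      have h := hx s
      rw [infDist_zero_of_mem hx1, infDist_zero_of_mem hs] at h
      linarith
    by_cases hx2 : x ∈ S₂
    · refine Or.inr ⟨hx2, fun s hs => ?_⟩
      have h := hx s
      rw [infDist_zero_of_mem hx2, infDist_zero_of_mem hs] at h
      linarith
    · left; left
      have hd₁pos : 0 < infDist x S₁ :=
        lt_of_le_of_ne infDist_nonneg (fun h => hx1 ((hc₁.mem_iff_infDist_zero h₁).mpr h.symm))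
      have hd₂pos : 0 < infDist x S₂ :=
        lt_of_le_of_ne infDist_nonneg (fun h => hx2 ((hc₂.mem_iff_infDist_zero h₂).mpr h.symm))
      -- midpoint estimate
      set m : X := (1/2 : ℝ) • a + (1/2 : ℝ) • b with hm
      have hma : m - a = (1/2 : ℝ) • (b - a) := by rw [hm]; module
      have hmb : m - b = (1/2 : ℝ) • (a - b) := by rw [hm]; module
      have hm1 : infDist m S₁ ≤ (1/2) * ‖b - a‖ := by
        calc infDist m S₁ ≤ dist m a := infDist_le_dist_of_mem ha
          _ = (1/2) * ‖b - a‖ := by rw [dist_eq_norm, hma, norm_smul]; simp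
      have hm2 : infDist m S₂ ≤ (1/2) * ‖b - a‖ := by
        calc infDist m S₂ ≤ dist m b := infDist_le_dist_of_mem hb
          _ = (1/2) * ‖b - a‖ := by
            rw [dist_eq_norm, hmb, norm_smul, norm_sub_rev a b]; simp
      have hsum : infDist x S₁ + infDist x S₂ ≤ ‖b - a‖ := by
        have h := hx m; linarith
      have htri : ‖b - a‖ ≤ infDist x S₁ + infDist x S₂ := by
        calc ‖b - a‖ = dist a b := by rw [dist_eq_norm, norm_sub_rev]
          _ ≤ dist a x + dist x b := dist_triangle _ _ _
          _ = infDist x S₁ + infDist x S₂ := by rw [dist_comm a x, hda, hdb]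
      have heq : ‖(a - x) + (x - b)‖ = ‖a - x‖ + ‖x - b‖ := by
        have e1 : ‖a - x‖ = infDist x S₁ := by rw [← hda, dist_eq_norm, norm_sub_rev]
        have e2 : ‖x - b‖ = infDist x S₂ := by rw [← hdb, dist_eq_norm]
        have e3 : (a - x) + (x - b) = a - b := by abel
        rw [e3, e1, e2, norm_sub_rev]
        linarith
      have hax : a - x ≠ 0 := by
        intro h
        rw [sub_eq_zero] at h
        rw [← hda, ← h, dist_self] at hd₁pos; exact lt_irrefl _ hd₁pos
      have hxb : x - b ≠ 0 := by
        intro h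
        rw [sub_eq_zero] at h
        rw [← hdb, h, dist_self] at hd₂pos; exact lt_irrefl _ hd₂pos
      have hray : SameRay ℝ (a - x) (x - b) := sameRay_iff_norm_add.mpr heq
      obtain ⟨r₁, r₂, hr₁, hr₂, hre⟩ := hray.exists_pos hax hxb
      have hrs : r₁ + r₂ ≠ 0 := by positivity
      refine ⟨r₂ / (r₁ + r₂), by positivity, ?_, ?_⟩
      · rw [div_lt_one (by positivity)]; linarith
      · have h2 : (r₁ + r₂) • x = r₁ • a + r₂ • b := by
          have h' : r₁ • a - r₁ • x = r₂ • x - r₂ • b := by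
            rw [← smul_sub, ← smul_sub]; exact hre
          have h'' := sub_eq_sub_iff_add_eq_add.mp h'
          rw [add_smul, h'']; abel
        have h3 : x = ((r₁+r₂)⁻¹ * r₁) • a + ((r₁+r₂)⁻¹ * r₂) • b := by
          have h4 := congrArg (fun z : X => (r₁+r₂)⁻¹ • z) h2
          simp only [smul_smul, smul_add] at h4
          rwa [inv_mul_cancel₀ hrs, one_smul] at h4
        have hcoef1 : (1 - r₂ / (r₁ + r₂)) = (r₁+r₂)⁻¹ * r₁ := by field_simp; ring
        have hcoef2 : r₂ / (r₁ + r₂) = (r₁+r₂)⁻¹ * r₂ := by field_simp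
        rw [hcoef1, hcoef2, ← ha_def, ← hb_def]
        exact h3
  · -- union ⟹ minimizer
    rintro ((⟨t, ht0, ht1, hseg⟩ | ⟨hxS, hmin⟩) | ⟨hxS, hmin⟩) y <;>
      obtain ⟨hya, hyda⟩ := hP₁ y <;> obtain ⟨hyb, hydb⟩ := hP₂ y
    · -- segment case
      rw [← ha_def, ← hb_def] at hseg
      have hxa : x - a = t • (b - a) := by rw [hseg]; module
      have hxb : x - b = (1 - t) • (a - b) := by rw [hseg]; module
      have inner1 : ∀ s ∈ S₁, ⟪b - a, s - a⟫ ≤ 0 := by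
        intro s hs
        have h := proj_inner_aux hv₁ ha hda s hs
        rw [hxa, real_inner_smul_left] at h
        exact le_of_not_gt fun hc => absurd h (not_le.mpr (mul_pos ht0 hc))
      have inner2 : ∀ s ∈ S₂, ⟪a - b, s - b⟫ ≤ 0 := by
        intro s hs
        have h := proj_inner_aux hv₂ hb hdb s hs
        rw [hxb, real_inner_smul_left] at h
        exact le_of_not_gt fun hc => absurd h (not_le.mpr (mul_pos (by linarith) hc))
      have e1 : infDist x S₁ = t * ‖b - a‖ := by
        rw [← hda, dist_eq_norm, hxa, norm_smul, Real.norm_eq_abs, abs_of_pos ht0]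
      have e2 : infDist x S₂ = (1 - t) * ‖b - a‖ := by
        rw [← hdb, dist_eq_norm, hxb, norm_smul, Real.norm_eq_abs,
          abs_of_pos (by linarith : (0:ℝ) < 1 - t), norm_sub_rev]
      have hgy : ‖b - a‖ ≤ dist (P₁ y) (P₂ y) := gap_aux inner1 inner2 hya hyb
      have htr : dist (P₁ y) (P₂ y) ≤ infDist y S₁ + infDist y S₂ := by
        rw [← hyda, ← hydb]
        calc dist (P₁ y) (P₂ y) ≤ dist (P₁ y) y + dist y (P₂ y) := dist_triangle _ _ _
          _ = dist y (P₁ y) + dist y (P₂ y) := by rw [dist_comm (P₁ y) y]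
      have hring : (1/2) * (t * ‖b - a‖) + (1/2) * ((1 - t) * ‖b - a‖)
          = (1/2) * ‖b - a‖ := by ring
      rw [e1, e2, hring]
      linarith
    · -- argmin over S₁
      have hle : infDist x S₂ ≤ infDist (P₁ y) S₂ := hmin _ hya
      have hle2 : infDist (P₁ y) S₂ ≤ dist (P₁ y) (P₂ y) := infDist_le_dist_of_mem hyb
      have htr : dist (P₁ y) (P₂ y) ≤ infDist y S₁ + infDist y S₂ := by
        rw [← hyda, ← hydb]
        calc dist (P₁ y) (P₂ y) ≤ dist (P₁ y) y + dist y (P₂ y) := dist_triangle _ _ _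
          _ = dist y (P₁ y) + dist y (P₂ y) := by rw [dist_comm (P₁ y) y]
      rw [infDist_zero_of_mem hxS]
      linarith
    · -- argmin over S₂
      have hle : infDist x S₁ ≤ infDist (P₂ y) S₁ := hmin _ hyb
      have hle2 : infDist (P₂ y) S₁ ≤ dist (P₂ y) (P₁ y) := infDist_le_dist_of_mem hya
      have htr : dist (P₂ y) (P₁ y) ≤ infDist y S₁ + infDist y S₂ := by
        rw [← hyda, ← hydb]
        calc dist (P₂ y) (P₁ y) ≤ dist (P₂ y) y + dist y (P₁ y) := dist_triangle _ _ _
          _ = dist y (P₁ y) + dist y (P₂ y) := by rw [dist_comm (P₂ y) y]; ring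
      rw [infDist_zero_of_mem hxS]
      linarith
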